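/- Let ρ be the order-three fixed-point-free isometry of D₄(−1) defined by d₁ ↦ −d₁+d₃−d₄, d₂ ↦ −d₁+d₂−d₃, d₃ ↦ −d₁−d₂+d₃+d₄, d₄ ↦ −d₂+d₃−d₄ on the basis with Gram matrix [[−2,0,−1,0],[0,−2,1,0],[−1,1,−2,1],[0,0,1,−2]]. The induced action of ρ on the discriminant group D₄(−1)*/D₄(−1) ≅ (ℤ/2ℤ)² is nontrivial: for the classes a = −d₁+½d₂+d₃+½d₄ and b = ½d₁−d₂−d₃−½d₄ generating the discriminant group, one has ρ*(a)=b and ρ*(b)=a+b. -/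

import Mathlib

open Matrix

/-- Gram matrix of `D₄(-1)` in the basis `d₁, d₂, d₃, d₄`. -/
def G4 : Matrix (Fin 4) (Fin 4) ℤ := !![-2,0,-1,0; 0,-2,1,0; -1,1,-2,1; 0,0,1,-2]

/-- The matrix of `ρ` (columns are the images of the basis vectors). -/
def R4 : Matrix (Fin 4) (Fin 4) ℤ := !![-1,-1,-1,0; 0,1,-1,-1; 1,-1,1,1; -1,0,1,-1]

/-- A rational vector (in `d`-coordinates) lies in the lattice `D₄(-1) = ℤ⁴`. -/
def Integral4 (x : Fin 4 → ℚ) : Prop := ∀ i, ∃ m : ℤ, x i = m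

/-- A rational vector lies in the dual lattice `D₄(-1)*`. -/
def InDual4 (x : Fin 4 → ℚ) : Prop := Integral4 ((G4.map (Int.cast : ℤ → ℚ)).mulVec x)

/-- `a = -d₁ + ½d₂ + d₃ + ½d₄`. -/
def a4 : Fin 4 → ℚ := ![-1, 1/2, 1, 1/2]
/-- `b = ½d₁ - d₂ - d₃ - ½d₄`. -/
def b4 : Fin 4 → ℚ := ![1/2, -1, -1, -1/2]

theorem stmt_4 :
    InDual4 a4 ∧ InDual4 b4 ∧ ¬ Integral4 a4 ∧ ¬ Integral4 b4 ∧
    Integral4 ((2 : ℚ) • a4) ∧ Integral4 ((2 : ℚ) • b4) ∧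
    (∀ x : Fin 4 → ℚ, InDual4 x → ∃ k l : ℤ,
      Integral4 (x - (k : ℚ) • a4 - (l : ℚ) • b4)) ∧
    Integral4 ((R4.map (Int.cast : ℤ → ℚ)).mulVec a4 - b4) ∧
    Integral4 ((R4.map (Int.cast : ℤ → ℚ)).mulVec b4 - (a4 + b4)) ∧
    ¬ Integral4 ((R4.map (Int.cast : ℤ → ℚ)).mulVec a4 - a4) := by
  refine ⟨?_, ?_, ?_, ?_, ?_, ?_, ?_, ?_, ?_, ?_⟩
  · intro i
    fin_cases i
    exacts [⟨1, by norm_num [G4, a4, Matrix.mulVec, dotProduct, Fin.sum_univ_four, Matrix.cons_val_two, Matrix.cons_val_three, Matrix.tail_cons, Matrix.head_cons]⟩,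
      ⟨0, by norm_num [G4, a4, Matrix.mulVec, dotProduct, Fin.sum_univ_four, Matrix.cons_val_two, Matrix.cons_val_three, Matrix.tail_cons, Matrix.head_cons]⟩,
      ⟨0, by norm_num [G4, a4, Matrix.mulVec, dotProduct, Fin.sum_univ_four, Matrix.cons_val_two, Matrix.cons_val_three, Matrix.tail_cons, Matrix.head_cons]⟩,
      ⟨0, by norm_num [G4, a4, Matrix.mulVec, dotProduct, Fin.sum_univ_four, Matrix.cons_val_two, Matrix.cons_val_three, Matrix.tail_cons, Matrix.head_cons]⟩]
  · intro i
    fin_cases i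
    exacts [⟨0, by norm_num [G4, b4, Matrix.mulVec, dotProduct, Fin.sum_univ_four, Matrix.cons_val_two, Matrix.cons_val_three, Matrix.tail_cons, Matrix.head_cons]⟩,
      ⟨1, by norm_num [G4, b4, Matrix.mulVec, dotProduct, Fin.sum_univ_four, Matrix.cons_val_two, Matrix.cons_val_three, Matrix.tail_cons, Matrix.head_cons]⟩,
      ⟨0, by norm_num [G4, b4, Matrix.mulVec, dotProduct, Fin.sum_univ_four, Matrix.cons_val_two, Matrix.cons_val_three, Matrix.tail_cons, Matrix.head_cons]⟩,
      ⟨0, by norm_num [G4, b4, Matrix.mulVec, dotProduct, Fin.sum_univ_four, Matrix.cons_val_two, Matrix.cons_val_three, Matrix.tail_cons, Matrix.head_cons]⟩]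
  · intro h
    obtain ⟨m, hm⟩ := h 1
    simp only [a4, Matrix.cons_val_one, Matrix.head_cons] at hm
    have h2 : (2 * m : ℤ) = 1 := by exact_mod_cast (by rw [← hm]; norm_num : (2 * m : ℚ) = 1)
    omega
  · intro h
    obtain ⟨m, hm⟩ := h 0
    simp only [b4, Matrix.cons_val_zero] at hm
    have h2 : (2 * m : ℤ) = 1 := by exact_mod_cast (by rw [← hm]; norm_num : (2 * m : ℚ) = 1)
    omega
  · intro i
    fin_cases i
    exacts [⟨-2, by norm_num [a4]⟩, ⟨1, by norm_num [a4]⟩, ⟨2, by norm_num [a4]⟩,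
      ⟨1, by norm_num [a4]⟩]
  · intro i
    fin_cases i
    exacts [⟨1, by norm_num [b4]⟩, ⟨-2, by norm_num [b4]⟩, ⟨-2, by norm_num [b4]⟩,
      ⟨-1, by norm_num [b4]⟩]
  · intro x hx
    obtain ⟨m0, h0⟩ := hx 0
    obtain ⟨m1, h1⟩ := hx 1
    obtain ⟨m2, h2⟩ := hx 2
    obtain ⟨m3, h3⟩ := hx 3
    simp only [G4, Matrix.mulVec, dotProduct, Fin.sum_univ_four, Matrix.map_apply,
      Matrix.cons_val', Matrix.cons_val_zero, Matrix.cons_val_one, Matrix.head_cons,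
      Matrix.empty_val', Matrix.cons_val_fin_one, Matrix.head_fin_const,
      Matrix.cons_val_two, Matrix.tail_cons, Matrix.cons_val_three,
      Matrix.of_apply] at h0 h1 h2 h3
    push_cast at h0 h1 h2 h3
    -- solve for x
    have e0 : x 0 = -m0 + m1/2 + m2 + m3/2 := by linarith
    have e1 : x 1 = m0/2 - m1 - m2 - m3/2 := by linarith
    have e2 : x 2 = m0 - m1 - 2*m2 - m3 := by linarith
    have e3 : x 3 = m0/2 - m1/2 - m2 - m3 := by linarith
    refine ⟨m0 + m3, m1 + m3, ?_⟩
    intro i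
    fin_cases i
    · refine ⟨m2 + m3, ?_⟩
      show x 0 - ((m0 + m3 : ℤ) : ℚ) * a4 0 - ((m1 + m3 : ℤ) : ℚ) * b4 0 = ((m2 + m3 : ℤ) : ℚ)
      simp [a4, b4]; linarith
    · refine ⟨-m2, ?_⟩
      show x 1 - ((m0 + m3 : ℤ) : ℚ) * a4 1 - ((m1 + m3 : ℤ) : ℚ) * b4 1 = ((-m2 : ℤ) : ℚ)
      simp [a4, b4]; linarith
    · refine ⟨-2*m2 - m3, ?_⟩
      show x 2 - ((m0 + m3 : ℤ) : ℚ) * a4 2 - ((m1 + m3 : ℤ) : ℚ) * b4 2 = ((-2*m2 - m3 : ℤ) : ℚ)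
      simp [a4, b4]; linarith
    · refine ⟨-m2 - m3, ?_⟩
      show x 3 - ((m0 + m3 : ℤ) : ℚ) * a4 3 - ((m1 + m3 : ℤ) : ℚ) * b4 3 = ((-m2 - m3 : ℤ) : ℚ)
      simp [a4, b4]; linarith
  · intro i
    fin_cases i
    exacts [⟨-1, by norm_num [R4, a4, b4, Matrix.mulVec, dotProduct, Fin.sum_univ_four, Matrix.cons_val_two, Matrix.cons_val_three, Matrix.tail_cons, Matrix.head_cons]⟩,
      ⟨0, by norm_num [R4, a4, b4, Matrix.mulVec, dotProduct, Fin.sum_univ_four, Matrix.cons_val_two, Matrix.cons_val_three, Matrix.tail_cons, Matrix.head_cons]⟩,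
      ⟨1, by norm_num [R4, a4, b4, Matrix.mulVec, dotProduct, Fin.sum_univ_four, Matrix.cons_val_two, Matrix.cons_val_three, Matrix.tail_cons, Matrix.head_cons]⟩,
      ⟨2, by norm_num [R4, a4, b4, Matrix.mulVec, dotProduct, Fin.sum_univ_four, Matrix.cons_val_two, Matrix.cons_val_three, Matrix.tail_cons, Matrix.head_cons]⟩]
  · intro i
    fin_cases i
    exacts [⟨2, by norm_num [R4, a4, b4, Matrix.mulVec, dotProduct, Fin.sum_univ_four, Matrix.cons_val_two, Matrix.cons_val_three, Matrix.tail_cons, Matrix.head_cons]⟩,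
      ⟨1, by norm_num [R4, a4, b4, Matrix.mulVec, dotProduct, Fin.sum_univ_four, Matrix.cons_val_two, Matrix.cons_val_three, Matrix.tail_cons, Matrix.head_cons]⟩,
      ⟨0, by norm_num [R4, a4, b4, Matrix.mulVec, dotProduct, Fin.sum_univ_four, Matrix.cons_val_two, Matrix.cons_val_three, Matrix.tail_cons, Matrix.head_cons]⟩,
      ⟨-1, by norm_num [R4, a4, b4, Matrix.mulVec, dotProduct, Fin.sum_univ_four, Matrix.cons_val_two, Matrix.cons_val_three, Matrix.tail_cons, Matrix.head_cons]⟩]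
  · intro h
    obtain ⟨m, hm⟩ := h 0
    simp only [R4, a4, Matrix.mulVec, dotProduct, Fin.sum_univ_four, Matrix.map_apply,
      Matrix.cons_val', Matrix.cons_val_zero, Matrix.cons_val_one, Matrix.head_cons,
      Matrix.empty_val', Matrix.cons_val_fin_one, Matrix.head_fin_const,
      Matrix.cons_val_two, Matrix.tail_cons, Matrix.cons_val_three,
      Matrix.of_apply, Pi.sub_apply] at hm
    norm_num at hm
    have h2 : (2 * m : ℤ) = 1 := by exact_mod_cast (by rw [← hm]; norm_num : (2 * m : ℚ) = 1)
    omega
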